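/- Let Q₀,…,Q_k be symmetric PSD n×n matrices, c_i ∈ ℝ^n, d_i ∈ ℝ, A ∈ ℝ^{m×n}, b ∈ ℝ^m. If the QCQP (minimize xᵀQ₀x + c₀ᵀx subject to xᵀQ_i x + c_iᵀx + d_i ≤ 0 for i=1,…,k and Ax = b) attains its minimum, then it has an optimal solution x* with card(x*) ≤ m − 1 + Σ_{i=0}^{k} (rank(Q_i) + 1). -/

import Mathlib

open Matrix Module

noncomputable def dotL {n : ℕ} (c : Fin n → ℝ) : (Fin n → ℝ) →ₗ[ℝ] ℝ where
  toFun x := c ⬝ᵥ x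
  map_add' x y := dotProduct_add c x y
  map_smul' r x := by simp

lemma finrank_le_n {n : ℕ} (p : Submodule ℝ (Fin n → ℝ)) : Module.finrank ℝ p ≤ n :=
  le_trans (Submodule.finrank_le p) (by simp)

lemma sparse_aux {n : ℕ} (W : Submodule ℝ (Fin n → ℝ)) :
    ∀ (s : ℕ) (x y : Fin n → ℝ), x - y ∈ W →
      (Finset.univ.filter fun i => x i ≠ 0).card ≤ s →
      ∃ x', x' - y ∈ W ∧
        (Finset.univ.filter fun i => x' i ≠ 0).card ≤ n - Module.finrank ℝ W := by
  intro s
  induction s with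
  | zero => exact fun x y hx hc => ⟨x, hx, hc.trans (Nat.zero_le _)⟩
  | succ s ih =>
    intro x y hx hc
    by_cases hle : (Finset.univ.filter fun i => x i ≠ 0).card ≤ n - Module.finrank ℝ W
    · exact ⟨x, hx, hle⟩
    push_neg at hle
    set T := Finset.univ.filter fun i => x i ≠ 0 with hT
    -- the subspace of vectors vanishing where x vanishes
    let φ : (Fin n → ℝ) →ₗ[ℝ] ({j : Fin n // x j = 0} → ℝ) :=
      LinearMap.pi fun j => LinearMap.proj j.1
    have hsplit : T.card + (Finset.univ.filter fun i : Fin n => x i = 0).card = n := by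
      have := Finset.card_filter_add_card_filter_not
        (s := (Finset.univ : Finset (Fin n))) (p := fun i => x i ≠ 0)
      simpa [hT] using this
    have h1 : Module.finrank ℝ (LinearMap.range φ) + Module.finrank ℝ (LinearMap.ker φ) = n := by
      rw [LinearMap.finrank_range_add_finrank_ker]; simp
    have h2 : Module.finrank ℝ (LinearMap.range φ) ≤
        (Finset.univ.filter fun i : Fin n => x i = 0).card := by
      refine le_trans (Submodule.finrank_le _) ?_
      simp [Module.finrank_fintype_fun_eq_card, Fintype.card_subtype]
    have h3 := Submodule.finrank_sup_add_finrank_inf_eq W (LinearMap.ker φ)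
    have h4 := finrank_le_n (W ⊔ LinearMap.ker φ)
    have h5 := finrank_le_n W
    have hpos : 0 < Module.finrank ℝ ↥(W ⊓ LinearMap.ker φ) := by omega
    obtain ⟨z, hz0⟩ := Module.finrank_pos_iff_exists_ne_zero.mp hpos
    obtain ⟨zW, zK⟩ := (Submodule.mem_inf.mp z.2)
    have hzsupp : ∀ j : Fin n, x j = 0 → (z : Fin n → ℝ) j = 0 := by
      intro j hj
      have := congrFun (LinearMap.mem_ker.mp zK) ⟨j, hj⟩
      simpa [φ] using this
    have hzne : ∃ i, (z : Fin n → ℝ) i ≠ 0 := by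
      by_contra h
      push_neg at h
      exact hz0 (Subtype.ext (funext fun i => h i))
    obtain ⟨i, hzi⟩ := hzne
    have hxi : x i ≠ 0 := fun h => hzi (hzsupp i h)
    set x'' := x - (x i / (z : Fin n → ℝ) i) • (z : Fin n → ℝ) with hx''
    have hmem : x'' - y ∈ W := by
      have : x'' - y = (x - y) - (x i / (z : Fin n → ℝ) i) • (z : Fin n → ℝ) := by
        rw [hx'']; abel
      rw [this]
      exact Submodule.sub_mem W hx (Submodule.smul_mem W _ zW)
    have hsub : (Finset.univ.filter fun j => x'' j ≠ 0) ⊆ T.erase i := by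
      intro j hj
      simp only [Finset.mem_filter, Finset.mem_univ, true_and] at hj
      rw [Finset.mem_erase]
      constructor
      · rintro rfl
        apply hj
        simp [hx'', Pi.sub_apply, Pi.smul_apply, smul_eq_mul, div_mul_cancel₀ _ hzi]
      · simp only [hT, Finset.mem_filter, Finset.mem_univ, true_and]
        intro hxj
        apply hj
        simp [hx'', Pi.sub_apply, Pi.smul_apply, smul_eq_mul, hxj, hzsupp j hxj]
    have hiT : i ∈ T := by simp [hT, hxi]
    have hcard : (Finset.univ.filter fun j => x'' j ≠ 0).card ≤ s := by
      have := Finset.card_le_card hsub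
      rw [Finset.card_erase_of_mem hiT] at this
      omega
    exact ih x'' y hmem hcard

lemma codim_inf {n : ℕ} (U V : Submodule ℝ (Fin n → ℝ)) :
    n - Module.finrank ℝ ↥(U ⊓ V) ≤ (n - Module.finrank ℝ U) + (n - Module.finrank ℝ V) := by
  have h := Submodule.finrank_sup_add_finrank_inf_eq U V
  have h1 := finrank_le_n (U ⊔ V)
  have h2 := finrank_le_n U
  have h3 := finrank_le_n V
  have h4 := finrank_le_n (U ⊓ V)
  omega

lemma codim_finset_inf {n : ℕ} {ι : Type*} (s : Finset ι) (f : ι → Submodule ℝ (Fin n → ℝ)) :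
    n - Module.finrank ℝ ↥(s.inf f) ≤ ∑ i ∈ s, (n - Module.finrank ℝ ↥(f i)) := by
  induction s using Finset.cons_induction with
  | empty =>
    simp only [Finset.sum_empty]
    rw [show (∅ : Finset ι).inf f = ⊤ from Finset.inf_empty, finrank_top]
    simp
  | cons i s hi ih =>
    rw [Finset.inf_cons, Finset.sum_cons]
    exact le_trans (codim_inf _ _) (by omega)
theorem stmt16 (n m k : ℕ)
    (Q0 : Matrix (Fin n) (Fin n) ℝ) (c0 : Fin n → ℝ)
    (Q : Fin k → Matrix (Fin n) (Fin n) ℝ) (c : Fin k → Fin n → ℝ) (d : Fin k → ℝ)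
    (A : Matrix (Fin m) (Fin n) ℝ) (b : Fin m → ℝ)
    (hQ0 : Q0.PosSemidef) (hQ : ∀ i, (Q i).PosSemidef)
    (y : Fin n → ℝ)
    (hyfeas : (∀ i, y ⬝ᵥ (Q i).mulVec y + c i ⬝ᵥ y + d i ≤ 0) ∧ A.mulVec y = b)
    (hyopt : ∀ x : Fin n → ℝ,
      (∀ i, x ⬝ᵥ (Q i).mulVec x + c i ⬝ᵥ x + d i ≤ 0) → A.mulVec x = b →
      y ⬝ᵥ Q0.mulVec y + c0 ⬝ᵥ y ≤ x ⬝ᵥ Q0.mulVec x + c0 ⬝ᵥ x) :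
    ∃ x' : Fin n → ℝ,
      (∀ i, x' ⬝ᵥ (Q i).mulVec x' + c i ⬝ᵥ x' + d i ≤ 0) ∧ A.mulVec x' = b ∧
      x' ⬝ᵥ Q0.mulVec x' + c0 ⬝ᵥ x' = y ⬝ᵥ Q0.mulVec y + c0 ⬝ᵥ y ∧
      (Finset.univ.filter fun i => x' i ≠ 0).card ≤
        m - 1 + ((Q0.rank + 1) + ∑ i, ((Q i).rank + 1)) := by
  classical
  obtain ⟨hfeas, heq⟩ := hyfeas
  set W : Submodule ℝ (Fin n → ℝ) :=
    LinearMap.ker A.mulVecLin ⊓ LinearMap.ker Q0.mulVecLin ⊓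
      Finset.univ.inf (fun i : Fin k =>
        LinearMap.ker (Q i).mulVecLin ⊓ LinearMap.ker (dotL (c i))) with hW
  -- facts about members of W
  have hmem : ∀ w ∈ W, A.mulVec w = 0 ∧ Q0.mulVec w = 0 ∧
      ∀ i, (Q i).mulVec w = 0 ∧ c i ⬝ᵥ w = 0 := by
    intro w hw
    rw [hW, Submodule.mem_inf, Submodule.mem_inf] at hw
    obtain ⟨⟨h1, h2⟩, h3⟩ := hw
    refine ⟨h1, h2, fun i => ?_⟩
    have hi := Submodule.mem_finsetInf.mp h3 i (Finset.mem_univ i)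
    exact Submodule.mem_inf.mp hi
  -- the symmetric quadratic form identity
  have quad : ∀ (M : Matrix (Fin n) (Fin n) ℝ), M.PosSemidef → ∀ w : Fin n → ℝ,
      M.mulVec w = 0 → ∀ v : Fin n → ℝ, (v + w) ⬝ᵥ M.mulVec (v + w) = v ⬝ᵥ M.mulVec v := by
    intro M hM w hw v
    have hsym : Mᵀ = M := by
      have := hM.1
      rwa [Matrix.IsHermitian, Matrix.conjTranspose_eq_transpose_of_trivial] at this
    rw [Matrix.mulVec_add, hw, add_zero, add_dotProduct]
    have : w ⬝ᵥ M.mulVec v = 0 := by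
      rw [Matrix.dotProduct_mulVec, ← Matrix.mulVec_transpose, hsym, hw, zero_dotProduct]
    rw [this, add_zero]
  -- feasibility of y + w and objective shift
  have hfeas' : ∀ w ∈ W,
      (∀ i, (y + w) ⬝ᵥ (Q i).mulVec (y + w) + c i ⬝ᵥ (y + w) + d i ≤ 0) ∧
      A.mulVec (y + w) = b ∧
      (y + w) ⬝ᵥ Q0.mulVec (y + w) + c0 ⬝ᵥ (y + w)
        = (y ⬝ᵥ Q0.mulVec y + c0 ⬝ᵥ y) + c0 ⬝ᵥ w := by
    intro w hw
    obtain ⟨hA, hQ0w, hQw⟩ := hmem w hw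
    refine ⟨fun i => ?_, ?_, ?_⟩
    · rw [quad (Q i) (hQ i) w (hQw i).1 y, dotProduct_add, (hQw i).2, add_zero]
      exact hfeas i
    · rw [Matrix.mulVec_add, hA, add_zero, heq]
    · rw [quad Q0 hQ0 w hQ0w y, dotProduct_add]; ring
  -- optimality forces c0 ⬝ᵥ w = 0 on W
  have hc0 : ∀ w ∈ W, c0 ⬝ᵥ w = 0 := by
    intro w hw
    obtain ⟨hf1, hf2, hf3⟩ := hfeas' w hw
    have h1 := hyopt (y + w) hf1 hf2
    rw [hf3] at h1
    obtain ⟨hg1, hg2, hg3⟩ := hfeas' (-w) (Submodule.neg_mem W hw)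
    have h2 := hyopt (y + -w) hg1 hg2
    rw [hg3] at h2
    simp only [dotProduct_neg] at h2
    linarith
  -- sparse point
  obtain ⟨x', hx'W, hx'card⟩ := sparse_aux W
    (Finset.univ.filter fun i => y i ≠ 0).card y y (by simp) le_rfl
  have hx'eq : x' = y + (x' - y) := by abel
  obtain ⟨hf1, hf2, hf3⟩ := hfeas' (x' - y) hx'W
  refine ⟨x', ?_, ?_, ?_, ?_⟩
  · intro i; rw [hx'eq]; exact hf1 i
  · rw [hx'eq]; exact hf2
  · rw [hx'eq, hf3, hc0 _ hx'W, add_zero]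
  -- the dimension count
  · refine hx'card.trans ?_
    have step1 : n - Module.finrank ℝ W ≤
        (n - Module.finrank ℝ (LinearMap.ker A.mulVecLin)) +
        (n - Module.finrank ℝ (LinearMap.ker Q0.mulVecLin)) +
        ∑ i : Fin k, (n - Module.finrank ℝ
          ↥(LinearMap.ker (Q i).mulVecLin ⊓ LinearMap.ker (dotL (c i)))) := by
      rw [hW]
      refine le_trans (codim_inf _ _) ?_
      have := codim_inf (LinearMap.ker A.mulVecLin) (LinearMap.ker Q0.mulVecLin)
      have := codim_finset_inf Finset.univ (fun i : Fin k =>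
        LinearMap.ker (Q i).mulVecLin ⊓ LinearMap.ker (dotL (c i)))
      omega
    have codim_ker : ∀ (M : Matrix (Fin n) (Fin n) ℝ),
        n - Module.finrank ℝ (LinearMap.ker M.mulVecLin) = M.rank := by
      intro M
      have h := LinearMap.finrank_range_add_finrank_ker M.mulVecLin
      simp only [Module.finrank_fintype_fun_eq_card, Fintype.card_fin] at h
      have := finrank_le_n (LinearMap.ker M.mulVecLin)
      rw [Matrix.rank]
      omega
    have hA : n - Module.finrank ℝ (LinearMap.ker A.mulVecLin) ≤ m := by
      have h := LinearMap.finrank_range_add_finrank_ker A.mulVecLin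
      simp only [Module.finrank_fintype_fun_eq_card, Fintype.card_fin] at h
      have h2 : Module.finrank ℝ (LinearMap.range A.mulVecLin) ≤ m := by
        refine le_trans (Submodule.finrank_le _) ?_
        simp
      omega
    have hterm : ∀ i : Fin k, n - Module.finrank ℝ
        ↥(LinearMap.ker (Q i).mulVecLin ⊓ LinearMap.ker (dotL (c i))) ≤ (Q i).rank + 1 := by
      intro i
      refine le_trans (codim_inf _ _) ?_
      rw [codim_ker]
      have h := LinearMap.finrank_range_add_finrank_ker (dotL (c i))
      simp only [Module.finrank_fintype_fun_eq_card, Fintype.card_fin] at h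
      have h2 : Module.finrank ℝ (LinearMap.range (dotL (c i))) ≤ 1 := by
        refine le_trans (Submodule.finrank_le _) ?_
        simp
      omega
    have hsum : ∑ i : Fin k, (n - Module.finrank ℝ
        ↥(LinearMap.ker (Q i).mulVecLin ⊓ LinearMap.ker (dotL (c i)))) ≤
        ∑ i : Fin k, ((Q i).rank + 1) :=
      Finset.sum_le_sum fun i _ => hterm i
    have hQ0r := codim_ker Q0
    omega
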